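/- If y : ℝ → ℝ^m is a solution of the Lotka-Volterra system ẏ_i = y_i(-∑_{j<i} y_j + ∑_{j>i} y_j), then the sum u_k(t) = y_1(t)+⋯+y_k(t) satisfies u̇_k = u_k(H - u_k), where H = y_1+⋯+y_m. -/

import Mathlib

lemma lv_key (a : ℕ → ℝ) (m k : ℕ) (h1 : 1 ≤ k) (hkm : k ≤ m) :
    ∑ i ∈ Finset.Icc 1 k, a i * (-(∑ j ∈ Finset.Ico 1 i, a j) + ∑ j ∈ Finset.Ioc i m, a j)
    = (∑ j ∈ Finset.Icc 1 k, a j) *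
        ((∑ j ∈ Finset.Icc 1 m, a j) - ∑ j ∈ Finset.Icc 1 k, a j) := by
  induction k, h1 using Nat.le_induction with
  | base =>
      have hsplit : Finset.Icc 1 1 ∪ Finset.Ioc 1 m = Finset.Icc 1 m := by
        ext x; simp [Finset.mem_Icc, Finset.mem_Ioc]; omega
      have hd : Disjoint (Finset.Icc 1 1) (Finset.Ioc 1 m) := by
        simp [Finset.disjoint_left]
      have hm : ∑ j ∈ Finset.Icc 1 m, a j
          = ∑ j ∈ Finset.Icc 1 1, a j + ∑ j ∈ Finset.Ioc 1 m, a j := by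
        rw [← Finset.sum_union hd, hsplit]
      simp only [Finset.Icc_self, Finset.sum_singleton] at hm ⊢
      rw [hm]
      simp [Finset.Ico_self]
  | succ k hk ih =>
      have hkm' : k ≤ m := le_trans (Nat.le_succ k) hkm
      have ihv := ih hkm'
      have hins : Finset.Icc 1 (k + 1) = insert (k + 1) (Finset.Icc 1 k) := by
        ext x; simp [Finset.mem_Icc]; omega
      have hnot : k + 1 ∉ Finset.Icc 1 k := by simp
      have hsplit : Finset.Icc 1 (k+1) ∪ Finset.Ioc (k+1) m = Finset.Icc 1 m := by
        ext x; simp [Finset.mem_Icc, Finset.mem_Ioc]; omega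
      have hd : Disjoint (Finset.Icc 1 (k+1)) (Finset.Ioc (k+1) m) := by
        simp [Finset.disjoint_left]; omega
      have hm : ∑ j ∈ Finset.Icc 1 m, a j
          = ∑ j ∈ Finset.Icc 1 (k+1), a j + ∑ j ∈ Finset.Ioc (k+1) m, a j := by
        rw [← Finset.sum_union hd, hsplit]
      have hico : Finset.Ico 1 (k+1) = Finset.Icc 1 k := by
        rw [Finset.Ico_add_one_right_eq_Icc]
      rw [hins, Finset.sum_insert hnot, Finset.sum_insert hnot, ihv, hico]
      have hm2 : ∑ j ∈ Finset.Ioc (k+1) m, a j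
          = ∑ j ∈ Finset.Icc 1 m, a j - (a (k+1) + ∑ j ∈ Finset.Icc 1 k, a j) := by
        rw [hm, hins, Finset.sum_insert hnot]; ring
      rw [hm2]; ring

/-- for a solution `y` of the Lotka-Volterra system (1-based indices 1..m),
the partial sum `u_k = y_1 + ⋯ + y_k` satisfies `u̇_k = u_k (H - u_k)` with `H = y_1 + ⋯ + y_m`. -/
theorem lv_partial_sum_ode (m : ℕ) (y : ℝ → ℕ → ℝ)
    (hy : ∀ i ∈ Finset.Icc 1 m, ∀ t : ℝ, HasDerivAt (fun s => y s i)
      (y t i * (-(∑ j ∈ Finset.Ico 1 i, y t j) + ∑ j ∈ Finset.Ioc i m, y t j)) t)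
    (k : ℕ) (hk : k ∈ Finset.Icc 1 m) (t : ℝ) :
    HasDerivAt (fun s => ∑ j ∈ Finset.Icc 1 k, y s j)
      ((∑ j ∈ Finset.Icc 1 k, y t j) *
        ((∑ j ∈ Finset.Icc 1 m, y t j) - ∑ j ∈ Finset.Icc 1 k, y t j)) t := by
  obtain ⟨hk1, hk2⟩ := Finset.mem_Icc.mp hk
  have h := HasDerivAt.fun_sum (fun i hi => hy i (by
    obtain ⟨h1, h2⟩ := Finset.mem_Icc.mp hi
    exact Finset.mem_Icc.mpr ⟨h1, le_trans h2 hk2⟩) t)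
  rwa [lv_key (y t) m k hk1 hk2] at h
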